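/- Let h be the logistic function, I(j), J(j) ≥ 0 integers, and Δ_{lj} real numbers. Then the first-order Taylor expansion holds: for the product f₂(t) = ∏_{l ∈ T₁} h(t + Δ_{lj}) · ∏_{l ∈ T₀} (1 - h(t + Δ_{lj})) with |T₁| = I(j) and |T₀| = J(j), we have |f₂(t) - [h(t)^{I(j)}(1-h(t))^{J(j)} + ∑_{l∈T₁} Δ_{lj} h'(t) h(t)^{I(j)-1}(1-h(t))^{J(j)} - ∑_{l∈T₀} Δ_{lj} h'(t) h(t)^{I(j)}(1-h(t))^{J(j)-1}]| ≤ C·∑_{l ∈ T₀∪T₁} Δ_{lj}², uniformly in t, for some constant C depending only on I(j) and J(j), provided all |Δ_{lj}| ≤ 1. -/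

import Mathlib

noncomputable def logistic (t : ℝ) : ℝ := 1 / (1 + Real.exp (-t))

lemma logistic_nonneg (t : ℝ) : 0 ≤ logistic t := by
  unfold logistic; positivity

lemma logistic_le_one (t : ℝ) : logistic t ≤ 1 := by
  unfold logistic
  rw [div_le_one (by positivity)]
  linarith [(Real.exp_pos (-t)).le]

lemma one_add_exp_pos (t : ℝ) : (0:ℝ) < 1 + Real.exp (-t) := by positivity

lemma hasDerivAt_logistic (t : ℝ) :
    HasDerivAt logistic (logistic t * (1 - logistic t)) t := by
  have h1 : HasDerivAt (fun x : ℝ => 1 + Real.exp (-x)) (-Real.exp (-t)) t := by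
    simpa using (HasDerivAt.const_add 1 ((Real.hasDerivAt_exp (-t)).comp t (hasDerivAt_neg t)))
  have h2 := h1.inv (ne_of_gt (one_add_exp_pos t))
  have heq : logistic = fun x : ℝ => (1 + Real.exp (-x))⁻¹ := by
    funext x; simp [logistic, one_div]
  rw [heq]
  refine h2.congr_deriv ?_
  have h3 := (one_add_exp_pos t).ne'
  field_simp [logistic]
  ring

lemma pq_nonneg (t : ℝ) : 0 ≤ logistic t * (1 - logistic t) :=
  mul_nonneg (logistic_nonneg t) (by linarith [logistic_le_one t])

lemma pq_le_one (t : ℝ) : logistic t * (1 - logistic t) ≤ 1 := by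
  have h1 := logistic_nonneg t; have h2 := logistic_le_one t
  nlinarith

lemma hasDerivAt_pq (t : ℝ) :
    HasDerivAt (fun x => logistic x * (1 - logistic x))
      (logistic t * (1 - logistic t) * (1 - 2 * logistic t)) t := by
  have h := (hasDerivAt_logistic t).mul ((hasDerivAt_logistic t).const_sub 1)
  refine h.congr_deriv ?_
  ring

lemma pq_lipschitz (x y : ℝ) :
    |logistic x * (1 - logistic x) - logistic y * (1 - logistic y)| ≤ |x - y| := by
  have := Convex.norm_image_sub_le_of_norm_hasDerivWithin_le
    (f := fun x => logistic x * (1 - logistic x))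
    (f' := fun x => logistic x * (1 - logistic x) * (1 - 2 * logistic x))
    (C := 1) (s := Set.univ)
    (fun z _ => (hasDerivAt_pq z).hasDerivWithinAt)
    (fun z _ => by
      have h1 := pq_nonneg z; have h2 := pq_le_one z
      have h3 := logistic_nonneg z; have h4 := logistic_le_one z
      rw [Real.norm_eq_abs, abs_mul]
      have : |1 - 2 * logistic z| ≤ 1 := by rw [abs_le]; constructor <;> linarith
      calc |logistic z * (1 - logistic z)| * |1 - 2 * logistic z|
          ≤ 1 * 1 := by
            apply mul_le_mul _ this (abs_nonneg _) zero_le_one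
            rw [abs_of_nonneg h1]; exact h2
        _ = 1 := by ring)
    convex_univ (Set.mem_univ y) (Set.mem_univ x)
  simpa [Real.norm_eq_abs] using this

lemma logistic_lipschitz (x y : ℝ) : |logistic x - logistic y| ≤ |x - y| := by
  have := Convex.norm_image_sub_le_of_norm_hasDerivWithin_le
    (f := logistic) (f' := fun x => logistic x * (1 - logistic x))
    (C := 1) (s := Set.univ)
    (fun z _ => (hasDerivAt_logistic z).hasDerivWithinAt)
    (fun z _ => by
      rw [Real.norm_eq_abs, abs_of_nonneg (pq_nonneg z)]; exact pq_le_one z)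
    convex_univ (Set.mem_univ y) (Set.mem_univ x)
  simpa [Real.norm_eq_abs] using this

lemma taylor_logistic (t δ : ℝ) :
    |logistic (t + δ) - logistic t - δ * (logistic t * (1 - logistic t))| ≤ δ ^ 2 := by
  set φ : ℝ → ℝ := fun x => logistic (t + x) - logistic t - x * (logistic t * (1 - logistic t))
    with hφ
  have hderiv : ∀ x : ℝ, HasDerivAt φ
      (logistic (t + x) * (1 - logistic (t + x)) - logistic t * (1 - logistic t)) x := by
    intro x
    have h1 : HasDerivAt (fun x : ℝ => logistic (t + x))
        (logistic (t + x) * (1 - logistic (t + x))) x := by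
      have := (hasDerivAt_logistic (t + x)).comp x ((hasDerivAt_id x).const_add t)
      simp at this; exact this
    have := (h1.sub_const (logistic t)).sub
      (hasDerivAt_mul_const (logistic t * (1 - logistic t)))
    exact this
  have key := Convex.norm_image_sub_le_of_norm_hasDerivWithin_le
    (f := φ)
    (f' := fun x => logistic (t + x) * (1 - logistic (t + x)) - logistic t * (1 - logistic t))
    (C := |δ|) (s := Set.uIcc 0 δ)
    (fun z _ => (hderiv z).hasDerivWithinAt)
    (fun z hz => by
      rw [Real.norm_eq_abs]
      have h1 : |z| ≤ |δ| := by
        have h2 := le_abs_self δ; have h3 := neg_abs_le δ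
        rcases Set.mem_uIcc.mp hz with ⟨h, h'⟩ | ⟨h, h'⟩ <;>
          (rw [abs_le]; constructor <;> linarith)
      calc |logistic (t + z) * (1 - logistic (t + z)) - logistic t * (1 - logistic t)|
          ≤ |(t + z) - t| := pq_lipschitz (t + z) t
        _ = |z| := by ring_nf
        _ ≤ |δ| := h1)
    (convex_uIcc 0 δ) (Set.left_mem_uIcc) (Set.right_mem_uIcc)
  have hφ0 : φ 0 = 0 := by simp [hφ]
  have : ‖φ δ - φ 0‖ ≤ |δ| * ‖δ - 0‖ := key
  rw [hφ0, sub_zero, sub_zero, Real.norm_eq_abs, Real.norm_eq_abs] at this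
  calc |φ δ| ≤ |δ| * |δ| := this
    _ = δ ^ 2 := by rw [← abs_mul, ← sq, abs_of_nonneg (sq_nonneg δ)]

lemma prod_mem_Icc (S : Finset ℕ) (a : ℕ → ℝ) (ha : ∀ l ∈ S, 0 ≤ a l ∧ a l ≤ 1) :
    0 ≤ ∏ l ∈ S, a l ∧ (∏ l ∈ S, a l) ≤ 1 :=
  ⟨Finset.prod_nonneg (fun l hl => (ha l hl).1),
   Finset.prod_le_one (fun l hl => (ha l hl).1) (fun l hl => (ha l hl).2)⟩

lemma abs_prod_sub_prod (S : Finset ℕ) (a b : ℕ → ℝ)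
    (ha : ∀ l ∈ S, 0 ≤ a l ∧ a l ≤ 1) (hb : ∀ l ∈ S, 0 ≤ b l ∧ b l ≤ 1) :
    |∏ l ∈ S, b l - ∏ l ∈ S, a l| ≤ ∑ l ∈ S, |b l - a l| := by
  induction S using Finset.induction_on with
  | empty => simp
  | @insert i S hi ih =>
    have ha' : ∀ l ∈ S, 0 ≤ a l ∧ a l ≤ 1 := fun l hl => ha l (Finset.mem_insert_of_mem hl)
    have hb' : ∀ l ∈ S, 0 ≤ b l ∧ b l ≤ 1 := fun l hl => hb l (Finset.mem_insert_of_mem hl)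
    have hai := ha i (Finset.mem_insert_self i S)
    have hbi := hb i (Finset.mem_insert_self i S)
    rw [Finset.prod_insert hi, Finset.prod_insert hi, Finset.sum_insert hi]
    have hA := prod_mem_Icc S a ha'
    have key : b i * ∏ l ∈ S, b l - a i * ∏ l ∈ S, a l
        = b i * (∏ l ∈ S, b l - ∏ l ∈ S, a l) + (b i - a i) * ∏ l ∈ S, a l := by ring
    rw [key]
    calc |b i * (∏ l ∈ S, b l - ∏ l ∈ S, a l) + (b i - a i) * ∏ l ∈ S, a l|
        ≤ |b i * (∏ l ∈ S, b l - ∏ l ∈ S, a l)| + |(b i - a i) * ∏ l ∈ S, a l| := abs_add_le _ _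
      _ ≤ |∏ l ∈ S, b l - ∏ l ∈ S, a l| + |b i - a i| := by
          rw [abs_mul, abs_mul]
          have h1 : |b i| ≤ 1 := by rw [abs_of_nonneg hbi.1]; exact hbi.2
          have h2 : |∏ l ∈ S, a l| ≤ 1 := by rw [abs_of_nonneg hA.1]; exact hA.2
          have h3 := abs_nonneg (∏ l ∈ S, b l - ∏ l ∈ S, a l)
          have h4 := abs_nonneg (b i - a i)
          have h5 := abs_nonneg (b i)
          have h6 := abs_nonneg (∏ l ∈ S, a l)
          nlinarith
      _ ≤ (∑ l ∈ S, |b l - a l|) + |b i - a i| := by gcongr; exact ih ha' hb'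
      _ = |b i - a i| + ∑ l ∈ S, |b l - a l| := by ring

lemma prod_taylor (S : Finset ℕ) (a b : ℕ → ℝ)
    (ha : ∀ l ∈ S, 0 ≤ a l ∧ a l ≤ 1) (hb : ∀ l ∈ S, 0 ≤ b l ∧ b l ≤ 1) :
    |∏ l ∈ S, b l - ∏ l ∈ S, a l -
        ∑ l ∈ S, (b l - a l) * ∏ k ∈ S.erase l, a k|
      ≤ (S.card : ℝ) ^ 2 * ∑ l ∈ S, (b l - a l) ^ 2 := by
  induction S using Finset.induction_on with
  | empty => simp
  | @insert i S hi ih =>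
    have ha' : ∀ l ∈ S, 0 ≤ a l ∧ a l ≤ 1 := fun l hl => ha l (Finset.mem_insert_of_mem hl)
    have hb' : ∀ l ∈ S, 0 ≤ b l ∧ b l ≤ 1 := fun l hl => hb l (Finset.mem_insert_of_mem hl)
    have hai := ha i (Finset.mem_insert_self i S)
    have hbi := hb i (Finset.mem_insert_self i S)
    set P := ∏ l ∈ S, b l with hP
    set A := ∏ l ∈ S, a l with hA
    set L := ∑ l ∈ S, (b l - a l) * ∏ k ∈ S.erase l, a k with hL
    have hsum : ∑ l ∈ insert i S, (b l - a l) * ∏ k ∈ (insert i S).erase l, a k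
        = (b i - a i) * A + a i * L := by
      rw [Finset.sum_insert hi, Finset.erase_insert hi]
      congr 1
      rw [hL, Finset.mul_sum]
      apply Finset.sum_congr rfl
      intro l hl
      have hne : i ≠ l := fun h => hi (h ▸ hl)
      rw [Finset.erase_insert_of_ne hne]
      rw [Finset.prod_insert (fun h => hi (Finset.mem_of_mem_erase h))]
      ring
    rw [Finset.prod_insert hi, Finset.prod_insert hi, hsum]
    have key : b i * P - a i * A - ((b i - a i) * A + a i * L)
        = a i * (P - A - L) + (b i - a i) * (P - A) := by ring
    rw [key]
    have hPA : |P - A| ≤ ∑ l ∈ S, |b l - a l| := abs_prod_sub_prod S a b ha' hb'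
    have hIH := ih ha' hb'
    have hcross : |b i - a i| * ∑ l ∈ S, |b l - a l|
        ≤ (S.card : ℝ) * ((b i - a i) ^ 2 + ∑ l ∈ S, (b l - a l) ^ 2) / 2 := by
      rw [Finset.mul_sum]
      have : ∀ l ∈ S, |b i - a i| * |b l - a l|
          ≤ ((b i - a i) ^ 2 + (b l - a l) ^ 2) / 2 := by
        intro l _
        nlinarith [sq_nonneg (|b i - a i| - |b l - a l|), sq_abs (b i - a i), sq_abs (b l - a l)]
      calc ∑ l ∈ S, |b i - a i| * |b l - a l|
          ≤ ∑ l ∈ S, ((b i - a i) ^ 2 + (b l - a l) ^ 2) / 2 := Finset.sum_le_sum this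
        _ = ((S.card : ℝ) * (b i - a i) ^ 2 + ∑ l ∈ S, (b l - a l) ^ 2) / 2 := by
            rw [← Finset.sum_div, Finset.sum_add_distrib, Finset.sum_const, nsmul_eq_mul]
        _ ≤ (S.card : ℝ) * ((b i - a i) ^ 2 + ∑ l ∈ S, (b l - a l) ^ 2) / 2 := by
            rcases Nat.eq_zero_or_pos S.card with h | h
            · simp [Finset.card_eq_zero.mp h]
            · have h1 : (1:ℝ) ≤ S.card := by exact_mod_cast h
              have h2 : (0:ℝ) ≤ ∑ l ∈ S, (b l - a l) ^ 2 :=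
                Finset.sum_nonneg (fun l _ => sq_nonneg _)
              have h3 : (0:ℝ) ≤ (b i - a i)^2 := sq_nonneg _
              rw [div_le_div_iff_of_pos_right (by norm_num)]
              nlinarith
    calc |a i * (P - A - L) + (b i - a i) * (P - A)|
        ≤ |a i * (P - A - L)| + |(b i - a i) * (P - A)| := abs_add_le _ _
      _ ≤ |P - A - L| + |b i - a i| * ∑ l ∈ S, |b l - a l| := by
          rw [abs_mul, abs_mul]
          have h1 : |a i| ≤ 1 := by rw [abs_of_nonneg hai.1]; exact hai.2
          have h3 := abs_nonneg (P - A - L)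
          have h4 := abs_nonneg (b i - a i)
          have h5 := abs_nonneg (a i)
          have h6 : |P - A| ≤ ∑ l ∈ S, |b l - a l| := hPA
          nlinarith
      _ ≤ (S.card : ℝ) ^ 2 * ∑ l ∈ S, (b l - a l) ^ 2
          + (S.card : ℝ) * ((b i - a i) ^ 2 + ∑ l ∈ S, (b l - a l) ^ 2) / 2 := by
          gcongr
      _ ≤ ((insert i S).card : ℝ) ^ 2 * ∑ l ∈ insert i S, (b l - a l) ^ 2 := by
          rw [Finset.card_insert_of_notMem hi, Finset.sum_insert hi]
          push_cast
          have h2 : (0:ℝ) ≤ ∑ l ∈ S, (b l - a l) ^ 2 :=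
            Finset.sum_nonneg (fun l _ => sq_nonneg _)
          have h3 : (0:ℝ) ≤ (b i - a i)^2 := sq_nonneg _
          have h4 : (0:ℝ) ≤ (S.card : ℝ) := Nat.cast_nonneg _
          nlinarith

theorem taylor_expansion_f2 (I J : ℕ) :
    ∃ C : ℝ, ∀ (T₀ T₁ : Finset ℕ) (Δ : ℕ → ℝ),
      Disjoint T₀ T₁ → T₁.card = I → T₀.card = J →
      (∀ l ∈ T₀ ∪ T₁, |Δ l| ≤ 1) →
      ∀ t : ℝ,
        |(∏ l ∈ T₁, logistic (t + Δ l)) * (∏ l ∈ T₀, (1 - logistic (t + Δ l))) -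
            (logistic t ^ I * (1 - logistic t) ^ J +
              (∑ l ∈ T₁, Δ l) * (logistic t * (1 - logistic t)) *
                logistic t ^ (I - 1) * (1 - logistic t) ^ J -
              (∑ l ∈ T₀, Δ l) * (logistic t * (1 - logistic t)) *
                logistic t ^ I * (1 - logistic t) ^ (J - 1))| ≤
          C * ∑ l ∈ T₀ ∪ T₁, (Δ l) ^ 2 := by
  refine ⟨((I : ℝ) + J) ^ 2 + 1, ?_⟩
  intro T₀ T₁ Δ hdisj hc1 hc0 hΔ t
  have hp0 := logistic_nonneg t
  have hp1 := logistic_le_one t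
  set p := logistic t with hp
  set q := 1 - p with hq
  have hq0 : 0 ≤ q := by rw [hq]; linarith
  have hq1 : q ≤ 1 := by rw [hq]; linarith
  set S := T₀ ∪ T₁ with hS
  set a : ℕ → ℝ := fun l => if l ∈ T₁ then p else q with hadef
  set b : ℕ → ℝ := fun l => if l ∈ T₁ then logistic (t + Δ l)
    else 1 - logistic (t + Δ l) with hbdef
  have hmemT₀ : ∀ l ∈ T₀, l ∉ T₁ := fun l hl => Finset.disjoint_left.mp hdisj hl
  have ha : ∀ l ∈ S, 0 ≤ a l ∧ a l ≤ 1 := by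
    intro l _
    simp only [hadef]
    split <;> constructor <;> first | exact hp0 | exact hp1 | exact hq0 | exact hq1
  have hb : ∀ l ∈ S, 0 ≤ b l ∧ b l ≤ 1 := by
    intro l _
    have h1 := logistic_nonneg (t + Δ l)
    have h2 := logistic_le_one (t + Δ l)
    simp only [hbdef]
    split <;> constructor <;> linarith
  -- product identities
  have hprodb : ∏ l ∈ S, b l
      = (∏ l ∈ T₁, logistic (t + Δ l)) * (∏ l ∈ T₀, (1 - logistic (t + Δ l))) := by
    rw [hS, Finset.prod_union hdisj, mul_comm]
    congr 1
    · exact Finset.prod_congr rfl (fun l hl => by simp only [hbdef, if_pos hl])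
    · exact Finset.prod_congr rfl (fun l hl => by simp only [hbdef, if_neg (hmemT₀ l hl)])
  have hproda : ∏ l ∈ S, a l = p ^ I * q ^ J := by
    rw [hS, Finset.prod_union hdisj, mul_comm]
    congr 1
    · rw [Finset.prod_congr rfl (fun l hl => by simp only [hadef, if_pos hl] : ∀ l ∈ T₁, a l = p),
        Finset.prod_const, hc1]
    · rw [Finset.prod_congr rfl
        (fun l hl => by simp only [hadef, if_neg (hmemT₀ l hl)] : ∀ l ∈ T₀, a l = q),
        Finset.prod_const, hc0]
  -- erase product identities
  have herase₁ : ∀ l ∈ T₁, ∏ k ∈ S.erase l, a k = p ^ (I - 1) * q ^ J := by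
    intro l hl
    have hiT₀ : l ∉ T₀ := fun h => hmemT₀ l h hl
    rw [hS, Finset.erase_union_distrib, Finset.erase_eq_of_notMem hiT₀]
    rw [Finset.prod_union (hdisj.mono_right (Finset.erase_subset _ _)), mul_comm]
    congr 1
    · rw [Finset.prod_congr rfl
        (fun k hk => by simp only [hadef, if_pos (Finset.mem_of_mem_erase hk)]
          : ∀ k ∈ T₁.erase l, a k = p),
        Finset.prod_const, Finset.card_erase_of_mem hl, hc1]
    · rw [Finset.prod_congr rfl
        (fun k hk => by simp only [hadef, if_neg (hmemT₀ k hk)] : ∀ k ∈ T₀, a k = q),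
        Finset.prod_const, hc0]
  have herase₀ : ∀ l ∈ T₀, ∏ k ∈ S.erase l, a k = p ^ I * q ^ (J - 1) := by
    intro l hl
    have hiT₁ : l ∉ T₁ := hmemT₀ l hl
    rw [hS, Finset.erase_union_distrib, Finset.erase_eq_of_notMem hiT₁]
    rw [Finset.prod_union (hdisj.mono_left (Finset.erase_subset _ _)), mul_comm]
    congr 1
    · rw [Finset.prod_congr rfl
        (fun k hk => by simp only [hadef, if_pos hk] : ∀ k ∈ T₁, a k = p),
        Finset.prod_const, hc1]
    · rw [Finset.prod_congr rfl
        (fun k hk => by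
          simp only [hadef, if_neg (hmemT₀ k (Finset.mem_of_mem_erase hk))]
          : ∀ k ∈ T₀.erase l, a k = q),
        Finset.prod_const, Finset.card_erase_of_mem hl, hc0]
  set K := ∑ l ∈ S, (b l - a l) * ∏ k ∈ S.erase l, a k with hK
  set Lin := (∑ l ∈ T₁, Δ l) * (p * q) * p ^ (I - 1) * q ^ J -
      (∑ l ∈ T₀, Δ l) * (p * q) * p ^ I * q ^ (J - 1) with hLin
  -- bound 1 : second order product expansion
  have hScard : (S.card : ℝ) = (I : ℝ) + J := by
    rw [hS, Finset.card_union_of_disjoint hdisj, hc0, hc1]; push_cast; ring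
  have hsq : ∀ l ∈ S, (b l - a l) ^ 2 ≤ (Δ l) ^ 2 := by
    intro l hl
    have hlip : |b l - a l| ≤ |Δ l| := by
      have h := logistic_lipschitz (t + Δ l) t
      simp only [add_sub_cancel_left] at h
      simp only [hbdef, hadef]
      split
      · exact h
      · rw [hq, show 1 - logistic (t + Δ l) - (1 - p) = -(logistic (t + Δ l) - p) by ring,
          abs_neg]
        exact h
    nlinarith [mul_self_le_mul_self (abs_nonneg (b l - a l)) hlip,
      sq_abs (b l - a l), sq_abs (Δ l)]
  have hbound1 : |∏ l ∈ S, b l - ∏ l ∈ S, a l - K|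
      ≤ ((I : ℝ) + J) ^ 2 * ∑ l ∈ S, (Δ l) ^ 2 := by
    calc |∏ l ∈ S, b l - ∏ l ∈ S, a l - K|
        ≤ (S.card : ℝ) ^ 2 * ∑ l ∈ S, (b l - a l) ^ 2 := prod_taylor S a b ha hb
      _ ≤ (S.card : ℝ) ^ 2 * ∑ l ∈ S, (Δ l) ^ 2 :=
          mul_le_mul_of_nonneg_left (Finset.sum_le_sum hsq) (by positivity)
      _ = ((I : ℝ) + J) ^ 2 * ∑ l ∈ S, (Δ l) ^ 2 := by rw [hScard]
  -- bound 2 : Taylor remainder of each factor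
  have htay : ∀ l ∈ S, |b l - a l - (if l ∈ T₁ then Δ l * (p * q) else -(Δ l * (p * q)))|
      ≤ (Δ l) ^ 2 := by
    intro l _
    have h := taylor_logistic t (Δ l)
    simp only [hbdef, hadef]
    split
    · exact_mod_cast h
    · rw [hq, show 1 - logistic (t + Δ l) - (1 - p) - -(Δ l * (p * q))
          = -(logistic (t + Δ l) - p - Δ l * (p * q)) by ring, abs_neg]
      exact h
  have hPle : ∀ m n : ℕ, |p ^ m * q ^ n| ≤ 1 := by
    intro m n
    rw [abs_of_nonneg (mul_nonneg (pow_nonneg hp0 m) (pow_nonneg hq0 n))]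
    exact mul_le_one₀ (pow_le_one₀ hp0 hp1) (pow_nonneg hq0 n) (pow_le_one₀ hq0 hq1)
  have hKsplit : K = ∑ l ∈ T₀, (b l - a l) * (p ^ I * q ^ (J - 1))
      + ∑ l ∈ T₁, (b l - a l) * (p ^ (I - 1) * q ^ J) := by
    rw [hK, hS, Finset.sum_union hdisj]
    congr 1
    · exact Finset.sum_congr rfl (fun l hl => by rw [herase₀ l hl])
    · exact Finset.sum_congr rfl (fun l hl => by rw [herase₁ l hl])
  have hbound2 : |K - Lin| ≤ ∑ l ∈ S, (Δ l) ^ 2 := by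
    have e1 : (∑ l ∈ T₁, Δ l) * (p * q) * p ^ (I - 1) * q ^ J
        = ∑ l ∈ T₁, Δ l * ((p * q) * (p ^ (I - 1) * q ^ J)) := by
      rw [Finset.sum_mul, Finset.sum_mul, Finset.sum_mul]
      exact Finset.sum_congr rfl (fun l _ => by ring)
    have e0 : (∑ l ∈ T₀, Δ l) * (p * q) * p ^ I * q ^ (J - 1)
        = ∑ l ∈ T₀, Δ l * ((p * q) * (p ^ I * q ^ (J - 1))) := by
      rw [Finset.sum_mul, Finset.sum_mul, Finset.sum_mul]
      exact Finset.sum_congr rfl (fun l _ => by ring)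
    have hKL : K - Lin
        = ∑ l ∈ T₀, (b l - a l + Δ l * (p * q)) * (p ^ I * q ^ (J - 1))
          + ∑ l ∈ T₁, (b l - a l - Δ l * (p * q)) * (p ^ (I - 1) * q ^ J) := by
      calc K - Lin
          = (∑ l ∈ T₀, (b l - a l) * (p ^ I * q ^ (J - 1))
              + ∑ l ∈ T₁, (b l - a l) * (p ^ (I - 1) * q ^ J))
            - (∑ l ∈ T₁, Δ l * ((p * q) * (p ^ (I - 1) * q ^ J))
              - ∑ l ∈ T₀, Δ l * ((p * q) * (p ^ I * q ^ (J - 1)))) := by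
            rw [hKsplit, hLin, e1, e0]
        _ = ∑ l ∈ T₀, ((b l - a l) * (p ^ I * q ^ (J - 1))
              + Δ l * ((p * q) * (p ^ I * q ^ (J - 1))))
            + ∑ l ∈ T₁, ((b l - a l) * (p ^ (I - 1) * q ^ J)
              - Δ l * ((p * q) * (p ^ (I - 1) * q ^ J))) := by
            rw [Finset.sum_add_distrib, Finset.sum_sub_distrib]; ring
        _ = _ := by
            congr 1 <;> exact Finset.sum_congr rfl (fun l _ => by ring)
    rw [hKL]
    have hb0 : ∀ l ∈ T₀, |(b l - a l + Δ l * (p * q)) * (p ^ I * q ^ (J - 1))| ≤ (Δ l) ^ 2 := by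
      intro l hl
      have ht := htay l (Finset.mem_union_left _ hl)
      rw [if_neg (hmemT₀ l hl)] at ht
      rw [abs_mul]
      calc |b l - a l + Δ l * (p * q)| * |p ^ I * q ^ (J - 1)|
          ≤ (Δ l) ^ 2 * 1 := by
            apply mul_le_mul _ (hPle I (J - 1)) (abs_nonneg _) (sq_nonneg _)
            rw [show b l - a l + Δ l * (p * q) = b l - a l - -(Δ l * (p * q)) by ring]
            exact ht
        _ = (Δ l) ^ 2 := mul_one _
    have hb1 : ∀ l ∈ T₁, |(b l - a l - Δ l * (p * q)) * (p ^ (I - 1) * q ^ J)| ≤ (Δ l) ^ 2 := by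
      intro l hl
      have ht := htay l (Finset.mem_union_right _ hl)
      rw [if_pos hl] at ht
      rw [abs_mul]
      calc |b l - a l - Δ l * (p * q)| * |p ^ (I - 1) * q ^ J|
          ≤ (Δ l) ^ 2 * 1 :=
            mul_le_mul ht (hPle (I - 1) J) (abs_nonneg _) (sq_nonneg _)
        _ = (Δ l) ^ 2 := mul_one _
    calc |∑ l ∈ T₀, (b l - a l + Δ l * (p * q)) * (p ^ I * q ^ (J - 1))
          + ∑ l ∈ T₁, (b l - a l - Δ l * (p * q)) * (p ^ (I - 1) * q ^ J)|
        ≤ |∑ l ∈ T₀, (b l - a l + Δ l * (p * q)) * (p ^ I * q ^ (J - 1))|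
          + |∑ l ∈ T₁, (b l - a l - Δ l * (p * q)) * (p ^ (I - 1) * q ^ J)| := abs_add_le _ _
      _ ≤ (∑ l ∈ T₀, (Δ l) ^ 2) + ∑ l ∈ T₁, (Δ l) ^ 2 := by
          gcongr
          · exact le_trans (Finset.abs_sum_le_sum_abs _ _) (Finset.sum_le_sum hb0)
          · exact le_trans (Finset.abs_sum_le_sum_abs _ _) (Finset.sum_le_sum hb1)
      _ = ∑ l ∈ S, (Δ l) ^ 2 := (Finset.sum_union hdisj).symm
  have hfinal : (∏ l ∈ T₁, logistic (t + Δ l)) * (∏ l ∈ T₀, (1 - logistic (t + Δ l)))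
      - (p ^ I * q ^ J
        + (∑ l ∈ T₁, Δ l) * (p * q) * p ^ (I - 1) * q ^ J
        - (∑ l ∈ T₀, Δ l) * (p * q) * p ^ I * q ^ (J - 1))
      = (∏ l ∈ S, b l - ∏ l ∈ S, a l - K) + (K - Lin) := by
    rw [← hprodb, ← hproda, hLin]; ring
  calc |(∏ l ∈ T₁, logistic (t + Δ l)) * (∏ l ∈ T₀, (1 - logistic (t + Δ l)))
      - (p ^ I * q ^ J
        + (∑ l ∈ T₁, Δ l) * (p * q) * p ^ (I - 1) * q ^ J
        - (∑ l ∈ T₀, Δ l) * (p * q) * p ^ I * q ^ (J - 1))|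
      = |(∏ l ∈ S, b l - ∏ l ∈ S, a l - K) + (K - Lin)| := by rw [hfinal]
    _ ≤ |∏ l ∈ S, b l - ∏ l ∈ S, a l - K| + |K - Lin| := abs_add_le _ _
    _ ≤ ((I : ℝ) + J) ^ 2 * (∑ l ∈ S, (Δ l) ^ 2) + ∑ l ∈ S, (Δ l) ^ 2 :=
        add_le_add hbound1 hbound2
    _ = (((I : ℝ) + J) ^ 2 + 1) * ∑ l ∈ S, (Δ l) ^ 2 := by ring
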